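/- If a formula φ in CNF has a primal graph of treewidth k, then the incidence graph of φ has treewidth at most k + 1. -/

import Mathlib

open scoped Classical

noncomputable section

/-- A literal is a variable paired with a polarity; a clause is a finite set of
literals; a CNF formula is a finite set of clauses. -/
abbrev Clause (V : Type) := Finset (V × Bool)

/-- An assignment satisfies a clause if some literal of the clause is satisfied. -/
def SatClause {V : Type} (t : V → Bool) (C : Clause V) : Prop :=
  ∃ l ∈ C, t l.1 = l.2

/-- An assignment satisfies a CNF formula if it satisfies every clause. -/
def SatCNF {V : Type} (t : V → Bool) (phi : Finset (Clause V)) : Prop :=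
  ∀ C ∈ phi, SatClause t C

/-- The literal-weighted model count of a CNF formula `phi` over variables `V` with
weight function `W`. -/
def weightedModelCount {V : Type} [Fintype V]
    (phi : Finset (Clause V)) (W : V → Bool → ℝ) : ℝ :=
  ∑ t : V → Bool, (if SatCNF t phi then (1 : ℝ) else 0) * ∏ x : V, W x (t x)

/-- Variable `x` occurs (positively or negatively) in clause `C`. -/
def Occurs {V : Type} (x : V) (C : Clause V) : Prop :=
  (x, true) ∈ C ∨ (x, false) ∈ C

/-- The primal graph of a CNF formula: vertices are the variables, with an edge between
two variables whenever they occur together in some clause. -/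
def primalGraph {V : Type} (phi : Finset (Clause V)) : SimpleGraph V :=
  SimpleGraph.fromRel fun x y => ∃ C ∈ phi, Occurs x C ∧ Occurs y C

/-- The incidence graph of a CNF formula: the bipartite graph on variables and clauses,
with an edge between a variable and a clause whenever the variable occurs in it. -/
def incidenceGraph {V : Type} (phi : Finset (Clause V)) :
    SimpleGraph (V ⊕ {C : Clause V // C ∈ phi}) :=
  SimpleGraph.fromRel fun a b =>
    ∃ x c, a = Sum.inl x ∧ b = Sum.inr c ∧ Occurs x c.val

/-- A tree decomposition of a graph `G`: a tree `tree` with bags of vertices of `G`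
attached to its nodes, covering all vertices and edges, such that for each vertex `v`
of `G` the set of tree nodes whose bag contains `v` induces a connected subtree. -/
structure TreeDecomp {V : Type} (G : SimpleGraph V) where
  τ : Type
  tree : SimpleGraph τ
  isTree : tree.IsTree
  bag : τ → Finset V
  bag_vertex : ∀ v : V, ∃ t, v ∈ bag t
  bag_edge : ∀ ⦃u v : V⦄, G.Adj u v → ∃ t, u ∈ bag t ∧ v ∈ bag t
  bag_connected : ∀ v : V, (tree.induce {t | v ∈ bag t}).Connected

/-- A tree decomposition has width at most `w` if every bag has at most `w + 1`
vertices. -/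
def TreeDecomp.widthLE {V : Type} {G : SimpleGraph V} (T : TreeDecomp G) (w : ℕ) :
    Prop :=
  ∀ t, (T.bag t).card ≤ w + 1

/-- A branch decomposition of a graph `G`: a tree whose leaves (vertices with a unique
neighbor) are in bijection with the edges of `G`. -/
structure BranchDecomp {V : Type} (G : SimpleGraph V) where
  τ : Type
  tree : SimpleGraph τ
  isTree : tree.IsTree
  leafEquiv : G.edgeSet ≃ {t : τ // ∃! s, tree.Adj t s}

namespace BranchDecomp

variable {V : Type} {G : SimpleGraph V}

/-- The set of edges of `G` whose leaves end up on the side of `t₁` after removing the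
tree edge `{t₁, t₂}`. -/
def side (B : BranchDecomp G) (t₁ t₂ : B.τ) : Set G.edgeSet :=
  {e | (B.tree.deleteEdges {s(t₁, t₂)}).Reachable (B.leafEquiv e).val t₁}

/-- The separator of a tree edge `{t₁, t₂}`: the vertices of `G` incident both to an
edge on the `t₁` side and to an edge on the `t₂` side. -/
def sep (B : BranchDecomp G) (t₁ t₂ : B.τ) : Set V :=
  {v | (∃ e ∈ B.side t₁ t₂, v ∈ (e : Sym2 V)) ∧
       (∃ e : G.edgeSet, e ∉ B.side t₁ t₂ ∧ v ∈ (e : Sym2 V))}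

/-- A branch decomposition has width at most `w` if all separators have at most `w`
vertices. -/
def widthLE (B : BranchDecomp G) (w : ℕ) : Prop :=
  ∀ t₁ t₂, B.tree.Adj t₁ t₂ → (B.sep t₁ t₂).ncard ≤ w

end BranchDecomp

/-- The branchwidth of `G`: the least width of a branch decomposition of `G`. -/
noncomputable def branchWidth {V : Type} (G : SimpleGraph V) : ℕ :=
  sInf {w | ∃ B : BranchDecomp G, B.widthLE w}

/-- A carving decomposition of a graph `G`: a tree whose leaves (vertices with a unique
neighbor) are in bijection with the vertices of `G`. -/
structure CarvingDecomp {V : Type} (G : SimpleGraph V) where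
  τ : Type
  tree : SimpleGraph τ
  isTree : tree.IsTree
  leafEquiv : V ≃ {t : τ // ∃! s, tree.Adj t s}

namespace CarvingDecomp

variable {V : Type} {G : SimpleGraph V}

/-- The set of vertices of `G` whose leaves end up on the side of `t₁` after removing
the tree edge `{t₁, t₂}`. -/
def side (C : CarvingDecomp G) (t₁ t₂ : C.τ) : Set V :=
  {v | (C.tree.deleteEdges {s(t₁, t₂)}).Reachable (C.leafEquiv v).val t₁}

/-- The number of edges of `G` crossing the bipartition of `V(G)` induced by the tree
edge `{t₁, t₂}`. -/
noncomputable def crossWidth (C : CarvingDecomp G) (t₁ t₂ : C.τ) : ℕ :=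
  {e : Sym2 V | e ∈ G.edgeSet ∧
    ∃ u w, e = s(u, w) ∧ u ∈ C.side t₁ t₂ ∧ w ∉ C.side t₁ t₂}.ncard

/-- A carving decomposition has width at most `w` if at most `w` edges cross every
induced bipartition. -/
def widthLE (C : CarvingDecomp G) (w : ℕ) : Prop :=
  ∀ t₁ t₂, C.tree.Adj t₁ t₂ → C.crossWidth t₁ t₂ ≤ w

end CarvingDecomp

/-- The carving width of `G`: the least width of a carving decomposition of `G`. -/
noncomputable def carvingWidth {V : Type} (G : SimpleGraph V) : ℕ :=
  sInf {w | ∃ C : CarvingDecomp G, C.widthLE w}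

namespace TWAux

open SimpleGraph Walk

variable {τ : Type} {G : SimpleGraph τ}

/-- A walk whose support lies in `S` gives reachability in the induced graph. -/
lemma reachable_induce_of_walk {S : Set τ} :
    ∀ {u v : τ} (w : G.Walk u v), (∀ x ∈ w.support, x ∈ S) →
      ∀ (hu : u ∈ S) (hv : v ∈ S), (G.induce S).Reachable ⟨u, hu⟩ ⟨v, hv⟩ := by
  intro u v w
  induction w with
  | nil => intro _ hu hv; rfl
  | @cons u x v h p ih =>
    intro hall hu hv
    have hx : x ∈ S := hall x (by simp)
    have h1 : (G.induce S).Adj ⟨u, hu⟩ ⟨x, hx⟩ := by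
      simp only [comap_adj, Function.Embedding.coe_subtype]; exact h
    exact h1.reachable.trans (ih (fun y hy => hall y (by simp [hy])) hx hv)

/-- Reachability in the induced graph gives a walk whose support lies in `S`. -/
lemma exists_walk_of_reachable_induce {S : Set τ} {u v : τ} {hu : u ∈ S} {hv : v ∈ S}
    (h : (G.induce S).Reachable ⟨u, hu⟩ ⟨v, hv⟩) :
    ∃ w : G.Walk u v, ∀ x ∈ w.support, x ∈ S := by
  obtain ⟨p⟩ := h
  refine ⟨p.map (SimpleGraph.Embedding.induce S).toHom, ?_⟩
  intro x hx
  erw [Walk.support_map] at hx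
  obtain ⟨y, _, rfl⟩ := List.mem_map.mp hx
  exact y.2

/-- In a tree, any path between two vertices of a connected set stays in the set. -/
lemma path_support_subset (hG : G.IsTree) {S : Set τ}
    (hS : (G.induce S).Connected) {u v : τ} (hu : u ∈ S) (hv : v ∈ S)
    {p : G.Walk u v} (hp : p.IsPath) : ∀ x ∈ p.support, x ∈ S := by
  obtain ⟨w, hw⟩ := exists_walk_of_reachable_induce (hS.preconnected ⟨u, hu⟩ ⟨v, hv⟩)
  have := (hG.existsUnique_path u v).unique hp w.bypass_isPath
  intro x hx
  rw [this] at hx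
  exact hw x (w.support_bypass_subset hx)

lemma glue_aux :
    ∀ {a b c : τ} (p : G.Walk a b) (q : G.Walk b c), p.IsPath → q.IsPath →
      ∃ (m : τ) (p₁ : G.Walk a m) (q₂ : G.Walk m c),
        (∀ x ∈ p₁.support, x ∈ p.support) ∧ (∀ x ∈ q₂.support, x ∈ q.support) ∧
        (p₁.append q₂).IsPath := by
  intro a b c p
  induction p with
  | nil =>
    intro q _ hq
    exact ⟨_, Walk.nil, q, by simp, by simp, by simpa using hq⟩
  | @cons a a' b h p' ih =>
    intro q hp hq
    by_cases ha : a ∈ q.support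
    · refine ⟨a, Walk.nil, q.dropUntil a ha, by simp, ?_, by simpa using hq.dropUntil ha⟩
      intro x hx
      exact q.support_dropUntil_subset ha hx
    · rw [Walk.cons_isPath_iff] at hp
      obtain ⟨m, p₁, q₂, hs1, hs2, hpath⟩ := ih q hp.1 hq
      refine ⟨m, Walk.cons h p₁, q₂, ?_, hs2, ?_⟩
      · intro x hx
        rw [Walk.support_cons, List.mem_cons] at hx ⊢
        rcases hx with rfl | hx
        · exact Or.inl rfl
        · exact Or.inr (hs1 x hx)
      · rw [Walk.cons_append]
        refine hpath.cons ?_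
        intro hmem
        rw [Walk.mem_support_append_iff] at hmem
        rcases hmem with hmem | hmem
        · exact hp.2 (hs1 a hmem)
        · exact ha (hs2 a hmem)

lemma glue {a b c : τ} (p : G.Walk a b) (q : G.Walk b c) (hp : p.IsPath) (hq : q.IsPath) :
    ∃ (m : τ) (r : G.Walk a c), r.IsPath ∧ m ∈ p.support ∧ m ∈ q.support ∧ m ∈ r.support := by
  obtain ⟨m, p₁, q₂, hs1, hs2, hpath⟩ := glue_aux p q hp hq
  exact ⟨m, p₁.append q₂, hpath, hs1 m p₁.end_mem_support, hs2 m q₂.start_mem_support,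
    (Walk.mem_support_append_iff _ _).mpr (Or.inl p₁.end_mem_support)⟩

lemma exists_path (hG : G.IsTree) (u v : τ) : ∃ p : G.Walk u v, p.IsPath :=
  ⟨(hG.isConnected.preconnected u v).some.bypass, Walk.bypass_isPath _⟩

/-- Helly property for three connected sets in a tree. -/
lemma helly3 (hG : G.IsTree) {A B C : Set τ}
    (hA : (G.induce A).Connected) (hB : (G.induce B).Connected) (hC : (G.induce C).Connected)
    {u v w : τ} (hu : u ∈ A ∩ B) (hv : v ∈ B ∩ C) (hw : w ∈ A ∩ C) :
    ∃ m, m ∈ A ∧ m ∈ B ∧ m ∈ C := by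
  obtain ⟨p, hp⟩ := exists_path hG u v
  obtain ⟨q, hq⟩ := exists_path hG v w
  obtain ⟨m, r, hr, hmp, hmq, hmr⟩ := glue p q hp hq
  exact ⟨m, path_support_subset hG hA hu.1 hw.1 hr m hmr,
    path_support_subset hG hB hu.2 hv.1 hp m hmp,
    path_support_subset hG hC hv.2 hw.2 hq m hmq⟩

lemma inter_connected (hG : G.IsTree) {A B : Set τ}
    (hA : (G.induce A).Connected) (hB : (G.induce B).Connected)
    (hne : (A ∩ B).Nonempty) : (G.induce (A ∩ B)).Connected := by
  rw [connected_iff]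
  refine ⟨?_, ⟨⟨hne.choose, hne.choose_spec⟩⟩⟩
  rintro ⟨x, hx⟩ ⟨y, hy⟩
  obtain ⟨p, hp⟩ := exists_path hG x y
  have h1 := path_support_subset hG hA hx.1 hy.1 hp
  have h2 := path_support_subset hG hB hx.2 hy.2 hp
  exact reachable_induce_of_walk p (fun z hz => Set.mem_inter (h1 z hz) (h2 z hz)) hx hy

lemma helly_finset {ι : Type*} (hG : G.IsTree) (A : ι → Set τ) (s : Finset ι) :
    ∀ (B : Set τ), (G.induce B).Connected → (∀ i ∈ s, (G.induce (A i)).Connected) →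
    (∀ i ∈ s, (B ∩ A i).Nonempty) → (∀ i ∈ s, ∀ j ∈ s, (A i ∩ A j).Nonempty) →
    ∃ m ∈ B, ∀ i ∈ s, m ∈ A i := by
  induction s using Finset.induction_on with
  | empty =>
    intro B hB _ _ _
    obtain ⟨x⟩ := hB.nonempty
    exact ⟨x.1, x.2, by simp⟩
  | @insert x s hx ih =>
    intro B hB hconn hBA hAA
    have hAx : (G.induce (A x)).Connected := hconn x (by simp)
    have hne : (B ∩ A x).Nonempty := hBA x (by simp)
    have hB' : (G.induce (B ∩ A x)).Connected := inter_connected hG hB hAx hne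
    have hstep : ∀ i ∈ s, ((B ∩ A x) ∩ A i).Nonempty := by
      intro i hi
      obtain ⟨u, hu⟩ := hne
      obtain ⟨v, hv⟩ := hAA x (by simp) i (by simp [hi])
      obtain ⟨w, hw⟩ := hBA i (by simp [hi])
      obtain ⟨m, hm1, hm2, hm3⟩ := helly3 hG hB hAx (hconn i (by simp [hi]))
        hu hv hw
      exact ⟨m, ⟨hm1, hm2⟩, hm3⟩
    obtain ⟨m, hm, hms⟩ := ih (B ∩ A x) hB' (fun i hi => hconn i (by simp [hi])) hstep
      (fun i hi j hj => hAA i (by simp [hi]) j (by simp [hj]))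
    refine ⟨m, hm.1, ?_⟩
    intro i hi
    rcases Finset.mem_insert.mp hi with rfl | hi
    · exact hm.2
    · exact hms i hi

end TWAux

namespace TWAux

open SimpleGraph Walk

section Attach

variable {α L : Type} (G : SimpleGraph α) (f : L → α)

/-- Attach, for each `l : L`, a pendant leaf to the vertex `f l` of `G`. -/
def attachLeaves : SimpleGraph (α ⊕ L) :=
  SimpleGraph.fromRel fun a b =>
    (∃ s t, a = Sum.inl s ∧ b = Sum.inl t ∧ G.Adj s t) ∨ ∃ l, a = Sum.inr l ∧ b = Sum.inl (f l)

variable {G f}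

lemma attachLeaves_adj_inl_inl {a b : α} :
    (attachLeaves G f).Adj (Sum.inl a) (Sum.inl b) ↔ G.Adj a b := by
  simp only [attachLeaves, fromRel_adj]
  constructor
  · rintro ⟨hne, (⟨s, t, hs, ht, hadj⟩ | ⟨l, hl, _⟩) | (⟨s, t, hs, ht, hadj⟩ | ⟨l, hl, _⟩)⟩
    · cases hs; cases ht; exact hadj
    · simp at hl
    · cases hs; cases ht; exact hadj.symm
    · simp at hl
  · intro h
    exact ⟨by simpa using h.ne, Or.inl (Or.inl ⟨a, b, rfl, rfl, h⟩)⟩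

lemma attachLeaves_adj_inr {l : L} {x : α ⊕ L} (h : (attachLeaves G f).Adj (Sum.inr l) x) :
    x = Sum.inl (f l) := by
  obtain ⟨hne, (⟨s, t, hs, _, _⟩ | ⟨l', hl, hx⟩) | (⟨s, t, _, ht, _⟩ | ⟨l', hl, hx⟩)⟩ := h
  · simp at hs
  · cases hl; exact hx
  · simp at ht
  · simp at hx

lemma attachLeaves_adj_inr' {l : L} : (attachLeaves G f).Adj (Sum.inr l) (Sum.inl (f l)) := by
  rw [attachLeaves, fromRel_adj]
  exact ⟨by simp, Or.inl (Or.inr ⟨l, rfl, rfl⟩)⟩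

lemma attachLeaves_lift :
    ∀ {u v : α ⊕ L} (w : (attachLeaves G f).Walk u v) (a b : α), u = Sum.inl a → v = Sum.inl b →
      (∀ x ∈ w.support, ∃ y, x = Sum.inl y) →
      ∃ w' : G.Walk a b, w'.support.map Sum.inl = w.support ∧
        w'.edges.map (Sym2.map Sum.inl) = w.edges := by
  intro u v w
  induction w with
  | nil =>
    rintro a b rfl hb _
    cases Sum.inl_injective hb
    exact ⟨Walk.nil, by simp, by simp⟩
  | @cons u x v h p ih =>
    rintro a b rfl rfl hall
    obtain ⟨a', rfl⟩ := hall x (by simp)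
    have hadj : G.Adj a a' := attachLeaves_adj_inl_inl.mp h
    obtain ⟨p', hs, he⟩ := ih a' b rfl rfl (fun y hy => hall y (by simp [hy]))
    exact ⟨Walk.cons hadj p', by simp [hs], by simp [he]⟩

lemma attachLeaves_isTree (hG : G.IsTree) : (attachLeaves G f).IsTree := by
  constructor
  · -- connected
    have hc : G.Connected := hG.isConnected
    have base : ∀ x : α ⊕ L, ∃ a : α, (attachLeaves G f).Reachable x (Sum.inl a) := by
      rintro (a | l)
      · exact ⟨a, Reachable.refl _⟩
      · exact ⟨f l, (attachLeaves_adj_inr' (f := f)).reachable⟩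
    rw [connected_iff]
    refine ⟨?_, ⟨Sum.inl hc.nonempty.some⟩⟩
    intro x y
    obtain ⟨a, hx⟩ := base x
    obtain ⟨b, hy⟩ := base y
    exact hx.trans (((hc.preconnected a b).map (⟨Sum.inl, fun h => attachLeaves_adj_inl_inl.mpr h⟩ : G →g attachLeaves G f)).trans hy.symm)
  · -- acyclic
    intro v c hc
    rcases Classical.em (∃ l, Sum.inr l ∈ c.support) with hinr | hinr
    · obtain ⟨l, hl⟩ := hinr
      have hc' : (c.rotate _ hl).IsCycle := hc.rotate hl
      obtain ⟨x, h₁, q, hq⟩ := Walk.not_nil_iff.mp hc'.not_nil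
      have hx := attachLeaves_adj_inr h₁
      subst hx
      rw [hq, Walk.cons_isCycle_iff] at hc'
      have hqr : ¬ q.reverse.Nil := Walk.not_nil_of_ne (by simp)
      obtain ⟨y, h₂, r, hr⟩ := Walk.not_nil_iff.mp hqr
      have hy := attachLeaves_adj_inr h₂
      subst hy
      have hrev : q.reverse.IsPath := hc'.1.reverse
      rw [hr, Walk.cons_isPath_iff] at hrev
      have hrnil : r = Walk.nil := (Walk.isPath_iff_eq_nil (p := r)).mp hrev.1
      subst hrnil
      have hqe : q = (Walk.cons h₂ Walk.nil).reverse := by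
        rw [← hr, Walk.reverse_reverse]
      apply hc'.2
      rw [hqe]
      simp [Walk.edges_reverse]
    · push_neg at hinr
      have hall : ∀ x ∈ c.support, ∃ y, x = Sum.inl y := by
        rintro (a | l) hx
        · exact ⟨a, rfl⟩
        · exact absurd hx (hinr l)
      obtain ⟨a, rfl⟩ := hall v c.start_mem_support
      obtain ⟨w', hs, he⟩ := attachLeaves_lift c a a rfl rfl hall
      have h1 : w'.edges.Nodup := by
        have := hc.isCircuit.isTrail.edges_nodup
        rw [← he] at this
        exact this.of_map _
      have h2 : w'.support.tail.Nodup := by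
        have := hc.support_nodup
        rw [← hs, ← List.map_tail] at this
        exact this.of_map _
      have h3 : w' ≠ Walk.nil := by
        intro hnil
        have hlen := hc.three_le_length
        rw [hnil] at he
        simp only [Walk.edges_nil, List.map_nil] at he
        rw [← Walk.length_edges, ← he] at hlen
        simp at hlen
      exact hG.IsAcyclic w' ⟨⟨⟨h1⟩, h3⟩, h2⟩

end Attach

end TWAux

namespace TWAux

open SimpleGraph Walk

lemma occurs_mem_image {V : Type} {c : Clause V} {x : V} :
    x ∈ c.image Prod.fst ↔ Occurs x c := by
  simp only [Finset.mem_image, Occurs]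
  constructor
  · rintro ⟨⟨y, b⟩, hb, rfl⟩
    cases b
    · exact Or.inr hb
    · exact Or.inl hb
  · rintro (h | h)
    · exact ⟨(x, true), h, rfl⟩
    · exact ⟨(x, false), h, rfl⟩

lemma clause_bag {V : Type} (phi : Finset (Clause V)) (T : TreeDecomp (primalGraph phi))
    (c : Clause V) (hc : c ∈ phi) : ∃ t, ∀ x, Occurs x c → x ∈ T.bag t := by
  have htree := T.isTree
  have hne : Nonempty T.τ := htree.isConnected.nonempty
  set A : V → Set T.τ := fun v => {t | v ∈ T.bag t} with hA
  have hpair : ∀ u, Occurs u c → ∀ v, Occurs v c → (A u ∩ A v).Nonempty := by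
    intro u hu v hv
    by_cases huv : u = v
    · subst huv
      obtain ⟨t, ht⟩ := T.bag_vertex u
      exact ⟨t, ht, ht⟩
    · have hadj : (primalGraph phi).Adj u v := by
        simp only [primalGraph, fromRel_adj]
        exact ⟨huv, Or.inl ⟨c, hc, hu, hv⟩⟩
      obtain ⟨t, h1, h2⟩ := T.bag_edge hadj
      exact ⟨t, h1, h2⟩
  by_cases hs : (c.image Prod.fst).Nonempty
  · obtain ⟨x₀, hx₀⟩ := hs
    have hocc₀ : Occurs x₀ c := occurs_mem_image.mp hx₀
    obtain ⟨m, hm, hms⟩ := helly_finset htree A (c.image Prod.fst) (A x₀)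
      (T.bag_connected x₀)
      (fun i _ => T.bag_connected i)
      (fun i hi => hpair x₀ hocc₀ i (occurs_mem_image.mp hi))
      (fun i hi j hj => hpair i (occurs_mem_image.mp hi) j (occurs_mem_image.mp hj))
    exact ⟨m, fun x hx => hms x (occurs_mem_image.mpr hx)⟩
  · refine ⟨Classical.arbitrary _, fun x hx => absurd ?_ hs⟩
    exact ⟨x, occurs_mem_image.mpr hx⟩

end TWAux

open TWAux in
theorem incidence_treewidth_le_primal_treewidth_add_one'
    {V : Type} [Fintype V] (phi : Finset (Clause V)) (k : ℕ)
    (T : TreeDecomp (primalGraph phi)) (hT : T.widthLE k) :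
    ∃ T' : TreeDecomp (incidenceGraph phi), T'.widthLE (k + 1) := by
  classical
  choose f hf using fun C : {C : Clause V // C ∈ phi} => clause_bag phi T C.1 C.2
  let bag' : T.τ ⊕ {C : Clause V // C ∈ phi} → Finset (V ⊕ {C : Clause V // C ∈ phi}) :=
    fun t' => match t' with
      | Sum.inl t => (T.bag t).image Sum.inl
      | Sum.inr C => ((T.bag (f C)).image Sum.inl) ∪ {Sum.inr C}
  have hmem_inl : ∀ (v : V) (t : T.τ),
      (Sum.inl v : V ⊕ {C : Clause V // C ∈ phi}) ∈ bag' (Sum.inl t) ↔ v ∈ T.bag t := by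
    intro v t; simp [bag']
  have hmem_inr : ∀ (v : V) (C : {C : Clause V // C ∈ phi}),
      (Sum.inl v : V ⊕ {C : Clause V // C ∈ phi}) ∈ bag' (Sum.inr C) ↔ v ∈ T.bag (f C) := by
    intro v C; simp [bag']
  refine ⟨⟨T.τ ⊕ {C : Clause V // C ∈ phi}, attachLeaves T.tree f,
    attachLeaves_isTree T.isTree, bag', ?_, ?_, ?_⟩, ?_⟩
  · -- bag_vertex
    rintro (v | C)
    · obtain ⟨t, ht⟩ := T.bag_vertex v
      exact ⟨Sum.inl t, (hmem_inl v t).mpr ht⟩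
    · exact ⟨Sum.inr C, by simp [bag']⟩
  · -- bag_edge
    intro u v huv
    simp only [incidenceGraph, SimpleGraph.fromRel_adj] at huv
    obtain ⟨hne, (⟨x, C, rfl, rfl, hocc⟩ | ⟨x, C, rfl, rfl, hocc⟩)⟩ := huv
    · exact ⟨Sum.inr C, (hmem_inr x C).mpr (hf C x hocc), by simp [bag']⟩
    · exact ⟨Sum.inr C, by simp [bag'], (hmem_inr x C).mpr (hf C x hocc)⟩
  · -- bag_connected
    rintro (v | C₀)
    · set Sv : Set (T.τ ⊕ {C : Clause V // C ∈ phi}) :=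
        {t' | (Sum.inl v : V ⊕ {C : Clause V // C ∈ phi}) ∈ bag' t'} with hSv
      have hS'inl : ∀ t : T.τ, Sum.inl t ∈ Sv ↔ v ∈ T.bag t := fun t => hmem_inl v t
      have hS'inr : ∀ C, Sum.inr C ∈ Sv ↔ v ∈ T.bag (f C) := fun C => hmem_inr v C
      let ψ : (T.tree.induce {t | v ∈ T.bag t}) →g ((attachLeaves T.tree f).induce Sv) :=
        { toFun := fun t => ⟨Sum.inl t.1, (hS'inl t.1).mpr t.2⟩
          map_rel' := fun {a b} h => attachLeaves_adj_inl_inl.mpr h }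
      have base : ∀ x : {x // x ∈ Sv}, ∃ (t : T.τ) (ht : v ∈ T.bag t)
          (ht' : Sum.inl t ∈ Sv),
          ((attachLeaves T.tree f).induce Sv).Reachable x ⟨Sum.inl t, ht'⟩ := by
        rintro ⟨x | C, hx⟩
        · exact ⟨x, (hS'inl x).mp hx, hx, SimpleGraph.Reachable.refl _⟩
        · have hvC : v ∈ T.bag (f C) := (hS'inr C).mp hx
          have h2 : Sum.inl (f C) ∈ Sv := (hS'inl _).mpr hvC
          refine ⟨f C, hvC, h2, ?_⟩
          have hadj : ((attachLeaves T.tree f).induce Sv).Adj ⟨Sum.inr C, hx⟩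
              ⟨Sum.inl (f C), h2⟩ := attachLeaves_adj_inr'
          exact hadj.reachable
      rw [SimpleGraph.connected_iff]
      constructor
      · intro x y
        obtain ⟨t1, ht1, ht1', hx⟩ := base x
        obtain ⟨t2, ht2, ht2', hy⟩ := base y
        have hold := (T.bag_connected v).preconnected ⟨t1, ht1⟩ ⟨t2, ht2⟩
        exact hx.trans ((hold.map ψ).trans hy.symm)
      · obtain ⟨t, ht⟩ := T.bag_vertex v
        exact ⟨⟨Sum.inl t, (hS'inl t).mpr ht⟩⟩
    · set Sc : Set (T.τ ⊕ {C : Clause V // C ∈ phi}) :=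
        {t' | (Sum.inr C₀ : V ⊕ {C : Clause V // C ∈ phi}) ∈ bag' t'} with hSc
      have key : ∀ x, x ∈ Sc → x = Sum.inr C₀ := by
        rintro (t | C) hx
        · exfalso; simp [hSc, bag'] at hx
        · have : C₀ = C := by simpa [hSc, bag'] using hx
          rw [this]
      rw [SimpleGraph.connected_iff]
      constructor
      · intro x y
        have hxy : x = y := Subtype.ext (by rw [key x.1 x.2, key y.1 y.2])
        rw [hxy]
      · exact ⟨⟨Sum.inr C₀, by simp [hSc, bag']⟩⟩
  · -- width
    rintro (t | C)
    · change (bag' (Sum.inl t)).card ≤ k + 1 + 1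
      have h1 : (bag' (Sum.inl t)).card = (T.bag t).card := by
        simp [bag', Finset.card_image_of_injective _ Sum.inl_injective]
      have := hT t
      omega
    · change (bag' (Sum.inr C)).card ≤ k + 1 + 1
      have h1 : (bag' (Sum.inr C)).card ≤ (T.bag (f C)).card + 1 := by
        refine le_trans (Finset.card_union_le _ _) ?_
        simp [Finset.card_image_of_injective _ Sum.inl_injective]
      have := hT (f C)
      omega


/-- if the primal graph of a CNF formula `phi` has treewidth `k` (i.e.
has a tree decomposition of width `k`), then the incidence graph of `phi` has treewidth
at most `k + 1` (i.e. has a tree decomposition of width `k + 1`). -/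
theorem incidence_treewidth_le_primal_treewidth_add_one
    {V : Type} [Fintype V] (phi : Finset (Clause V)) (k : ℕ)
    (T : TreeDecomp (primalGraph phi)) (hT : T.widthLE k) :
    ∃ T' : TreeDecomp (incidenceGraph phi), T'.widthLE (k + 1) :=
  incidence_treewidth_le_primal_treewidth_add_one' phi k T hT
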